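/- Let s ∈ (−1,1), set L = (1 + |s|)/(1 − |s|), let ε₀ > 0, and let ψ : S¹ → S¹ be continuous with |ψ(ζ) − h_s(ζ)| ≤ ε₀ for every ζ ∈ S¹. Then d_{S¹}(h_s^{-1}(ψ(ζ)), ζ) ≤ π·L·ε₀/2 for every ζ ∈ S¹; moreover, every w ∈ 𝔻 with ξ_{h_s^{-1}∘ψ}(w) = 0 satisfies |w| ≤ 2·π·L·ε₀/2 = π·L·ε₀. -/

import Mathlib

/-- The Möbius transformation `h_s(z) = (z + s)/(1 + s z)` of the unit disk,
for a real parameter `s`.  Its inverse is `h_{-s}`. -/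
noncomputable def mobH (s : ℝ) (z : ℂ) : ℂ := (z + (s : ℂ)) / (1 + (s : ℂ) * z)

/-- Arc-length distance on the unit circle: the infimum of `|x₁ − x₂|` over
representatives `ζ₁ = e^{ix₁}`, `ζ₂ = e^{ix₂}`. -/
noncomputable def dS1 (ζ₁ ζ₂ : ℂ) : ℝ :=
  sInf {d : ℝ | ∃ x₁ x₂ : ℝ, ζ₁ = Complex.exp (Complex.I * (x₁ : ℂ)) ∧
    ζ₂ = Complex.exp (Complex.I * (x₂ : ℂ)) ∧ d = |x₁ - x₂|}

/-- The average `ξ_φ(w) = (1/2π)·∫₀^{2π} (φ(e^{ix}) − w)/(1 − w̄·φ(e^{ix})) dx`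
of a circle map `φ` taken at `w` in the unit disk. -/
noncomputable def avgMap (φ : ℂ → ℂ) (w : ℂ) : ℂ :=
  (1 / (2 * Real.pi)) • ∫ x in (0 : ℝ)..(2 * Real.pi),
    (φ (Complex.exp (Complex.I * (x : ℂ))) - w) /
      (1 - (starRingEnd ℂ) w * φ (Complex.exp (Complex.I * (x : ℂ))))


open Complex in
lemma aux_one_add_ne {t : ℝ} (ht : |t| < 1) {z : ℂ} (hz : ‖z‖ = 1) :
    (1 : ℂ) + (t : ℂ) * z ≠ 0 := by
  intro h
  have h2 : (t : ℂ) * z = -1 := by linear_combination h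
  have : ‖(t:ℂ) * z‖ = 1 := by rw [h2]; simp
  rw [norm_mul, hz, mul_one, Complex.norm_real, Real.norm_eq_abs] at this
  linarith


lemma aux_mobH_abs {t : ℝ} (ht : |t| < 1) {z : ℂ} (hz : ‖z‖ = 1) :
    ‖mobH t z‖ = 1 := by
  have hd := aux_one_add_ne ht hz
  have hn : Complex.normSq z = 1 := by
    rw [Complex.normSq_eq_norm_sq, hz]; norm_num
  rw [Complex.normSq_apply] at hn
  have key : ‖z + (t:ℂ)‖ = ‖1 + (t:ℂ) * z‖ := by
    have h1 : ‖z + (t:ℂ)‖ ^ 2 = ‖1 + (t:ℂ)*z‖ ^ 2 := by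
      rw [Complex.sq_norm, Complex.sq_norm, Complex.normSq_apply, Complex.normSq_apply]
      simp only [Complex.add_re, Complex.add_im, Complex.ofReal_re, Complex.ofReal_im,
        Complex.one_re, Complex.one_im, Complex.mul_re, Complex.mul_im]
      linear_combination (1 - t^2) * hn
    calc ‖z + (t:ℂ)‖ = Real.sqrt (‖z + (t:ℂ)‖ ^ 2) :=
          (Real.sqrt_sq (norm_nonneg _)).symm
      _ = Real.sqrt (‖1 + (t:ℂ)*z‖ ^ 2) := by rw [h1]
      _ = ‖1 + (t:ℂ)*z‖ := Real.sqrt_sq (norm_nonneg _)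
  rw [mobH, norm_div, key, div_self]
  exact norm_ne_zero_iff.mpr hd

lemma aux_mobH_inv {t : ℝ} (ht : |t| < 1) {z : ℂ} (hz : ‖z‖ = 1) :
    mobH (-t) (mobH t z) = z := by
  have hd1 := aux_one_add_ne ht hz
  have ht2 : ((1:ℂ) - (t:ℂ)^2) ≠ 0 := by
    intro h
    have : ((t:ℂ))^2 = 1 := by linear_combination -h
    have : (t:ℝ)^2 = 1 := by exact_mod_cast this
    nlinarith [abs_nonneg t, sq_abs t]
  have hd2 : (1 : ℂ) + -(t:ℂ) * ((z + (t:ℂ)) / (1 + (t:ℂ) * z)) ≠ 0 := by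
    intro h
    have h2 : ((1:ℂ) + -(t:ℂ) * ((z + (t:ℂ))/(1+(t:ℂ)*z))) * (1 + (t:ℂ)*z) = 0 := by
      rw [h]; ring
    have h3 : (1:ℂ) - (t:ℂ)^2 = 0 := by
      field_simp at h2
      linear_combination h2
    exact ht2 h3
  rw [mobH, mobH]
  push_cast
  rw [div_eq_iff hd2]
  field_simp
  linear_combination (z + (t:ℂ)) * mul_inv_cancel₀ hd1

lemma aux_mobH_diff {t : ℝ} (ht : |t| < 1) {a b : ℂ} (ha : ‖a‖ = 1)
    (hb : ‖b‖ = 1) :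
    ‖mobH (-t) a - mobH (-t) b‖ ≤ (1 + |t|) / (1 - |t|) * ‖a - b‖ := by
  have ht1 : (0:ℝ) < 1 - |t| := by linarith [abs_nonneg t]
  have hda : (1 : ℂ) + (-t : ℝ) * a ≠ 0 := aux_one_add_ne (by rwa [abs_neg]) ha
  have hdb : (1 : ℂ) + (-t : ℝ) * b ≠ 0 := aux_one_add_ne (by rwa [abs_neg]) hb
  have key : mobH (-t) a - mobH (-t) b =
      ((1:ℂ) - (t:ℂ)^2) * (a - b) / ((1 + (-t:ℝ) * a) * (1 + (-t:ℝ) * b)) := by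
    rw [mobH, mobH, div_sub_div _ _ hda hdb]
    push_cast
    congr 1
    ring
  rw [key, norm_div, norm_mul, norm_mul]
  have habs1 : ‖(1:ℂ) - (t:ℂ)^2‖ = 1 - t^2 := by
    rw [show ((1:ℂ) - (t:ℂ)^2) = ((1 - t^2 : ℝ) : ℂ) by push_cast; ring, Complex.norm_real, Real.norm_eq_abs]
    rw [abs_of_nonneg]
    nlinarith [sq_abs t, abs_nonneg t]
  have hlow : ∀ c : ℂ, ‖c‖ = 1 → 1 - |t| ≤ ‖1 + (-t : ℝ) * c‖ := by
    intro c hc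
    have e1 : (1:ℂ) + (-t:ℝ) * c = 1 - (t:ℂ) * c := by push_cast; ring
    rw [e1]
    have h := norm_sub_norm_le (1 : ℂ) ((t:ℂ) * c)
    have e2 : ‖(t:ℂ)*c‖ = |t| := by
      rw [norm_mul, hc, mul_one, Complex.norm_real, Real.norm_eq_abs]
    rw [norm_one, e2] at h
    linarith
  have h1 := hlow a ha
  have h2 := hlow b hb
  have hpos1 : (0:ℝ) < ‖1 + (-t:ℝ) * a‖ := lt_of_lt_of_le ht1 h1
  have hpos2 : (0:ℝ) < ‖1 + (-t:ℝ) * b‖ := lt_of_lt_of_le ht1 h2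
  rw [div_le_iff₀ (by positivity)]
  have habs2 : ‖(1:ℂ) - (t:ℂ)^2‖ = (1-|t|)*(1+|t|) := by
    rw [habs1]; nlinarith [sq_abs t]
  rw [habs2]
  have hab : (0:ℝ) ≤ ‖a - b‖ := norm_nonneg _
  calc (1-|t|)*(1+|t|) * ‖a-b‖
      = ((1+|t|)/(1-|t|) * ‖a-b‖) * ((1-|t|) * (1-|t|)) := by
        field_simp
    _ ≤ ((1+|t|)/(1-|t|) * ‖a-b‖) * (‖1 + (-t:ℝ)*a‖ * ‖1 + (-t:ℝ)*b‖) := by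
        apply mul_le_mul_of_nonneg_left _ (by positivity)
        exact mul_le_mul h1 h2 ht1.le (norm_nonneg _)

noncomputable def Fc (r c : ℝ) : ℝ := ((1+r^2)*c - 2*r)/(1+r^2-2*r*c)

lemma aux_Fc_den_pos {r c : ℝ} (hr0 : 0 ≤ r) (hr1 : r < 1) (hc1 : c ≤ 1) :
    0 < 1+r^2-2*r*c := by nlinarith

lemma aux_Fc_mono {r c₁ c₂ : ℝ} (hr0 : 0 ≤ r) (hr1 : r < 1) (h12 : c₁ ≤ c₂) (h2 : c₂ ≤ 1) :
    Fc r c₁ ≤ Fc r c₂ := by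
  have d1 : 0 < 1+r^2-2*r*c₁ := aux_Fc_den_pos hr0 hr1 (le_trans h12 h2)
  have d2 : 0 < 1+r^2-2*r*c₂ := aux_Fc_den_pos hr0 hr1 h2
  rw [Fc, Fc, div_le_div_iff₀ d1 d2]
  nlinarith [mul_nonneg (sub_nonneg.2 h12) (sq_nonneg (1-r^2))]

lemma aux_neg_one_le_Fc {r c : ℝ} (hr0 : 0 ≤ r) (hr1 : r < 1) (hc : -1 ≤ c) (hc1 : c ≤ 1) :
    -1 ≤ Fc r c := by
  have d : 0 < 1+r^2-2*r*c := aux_Fc_den_pos hr0 hr1 hc1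
  rw [Fc, le_div_iff₀ d]
  nlinarith [mul_nonneg (by linarith : (0:ℝ) ≤ 1+c) (sq_nonneg (1-r))]

lemma aux_Fc_le_one {r c : ℝ} (hr0 : 0 ≤ r) (hr1 : r < 1) (hc1 : c ≤ 1) :
    Fc r c ≤ 1 := by
  have d : 0 < 1+r^2-2*r*c := aux_Fc_den_pos hr0 hr1 hc1
  rw [Fc, div_le_one d]
  nlinarith

lemma aux_Fc_one {r : ℝ} (hr0 : 0 ≤ r) (hr1 : r < 1) : Fc r 1 = 1 := by
  have d : 0 < 1+r^2-2*r*1 := aux_Fc_den_pos hr0 hr1 le_rfl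
  rw [Fc, div_eq_one_iff_eq (ne_of_gt d)]
  ring

lemma aux_re_mobius {r : ℝ} (hr0 : 0 ≤ r) (hr1 : r < 1) {η : ℂ} (hη : ‖η‖ = 1) :
    ((η - (r:ℂ)) / (1 - (r:ℂ) * η)).re = Fc r η.re := by
  have hn : η.re * η.re + η.im * η.im = 1 := by
    have : Complex.normSq η = 1 := by rw [Complex.normSq_eq_norm_sq, hη]; norm_num
    rwa [Complex.normSq_apply] at this
  have hre : -1 ≤ η.re := by
    have := Complex.abs_re_le_norm η; rw [hη] at this; cases abs_le.1 this; assumption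
  have hre1 : η.re ≤ 1 := by
    have := Complex.abs_re_le_norm η; rw [hη] at this; exact (abs_le.1 this).2
  have d : 0 < 1+r^2-2*r*η.re := aux_Fc_den_pos hr0 hr1 hre1
  rw [Complex.div_re, Fc]
  have hns : Complex.normSq (1 - (r:ℂ) * η) = 1+r^2-2*r*η.re := by
    rw [Complex.normSq_apply]
    simp only [Complex.sub_re, Complex.sub_im, Complex.one_re, Complex.one_im,
      Complex.mul_re, Complex.mul_im, Complex.ofReal_re, Complex.ofReal_im]
    nlinarith [hn]
  rw [hns]
  simp only [Complex.sub_re, Complex.sub_im, Complex.one_re, Complex.one_im,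
    Complex.mul_re, Complex.mul_im, Complex.ofReal_re, Complex.ofReal_im]
  rw [← add_div, div_eq_div_iff (ne_of_gt d) (ne_of_gt d)]
  linear_combination (-(r) * (1+r^2-2*r*η.re)) * hn

lemma aux_jordan {t : ℝ} (h : |t| ≤ Real.pi) : |t| ≤ Real.pi * |Real.sin (t/2)| := by
  have h2 : |t/2| ≤ Real.pi / 2 := by rw [abs_div]; simp; linarith [abs_nonneg t, h]
  have := Real.mul_abs_le_abs_sin h2
  have hpi := Real.pi_pos
  rw [abs_div] at this
  simp only [abs_two] at this
  calc |t| = Real.pi * (2 / Real.pi * (|t|/2)) := by field_simp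
    _ ≤ Real.pi * |Real.sin (t/2)| := by
        apply mul_le_mul_of_nonneg_left _ hpi.le
        calc 2 / Real.pi * (|t|/2) = 2 / Real.pi * |t/2| := by rw [abs_div, abs_two]
          _ ≤ |Real.sin (t/2)| := Real.mul_abs_le_abs_sin h2

lemma aux_realTrig {β γ : ℝ} (hβ : |β| ≤ Real.pi) (hγ : |γ| ≤ Real.pi) :
    |γ| ≤ |β| + Real.pi * |Real.sin ((β - γ)/2)| := by
  have hpi := Real.pi_pos
  rcases le_or_gt |β - γ| Real.pi with hd | hd
  · have := aux_jordan hd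
    have h2 : |γ| - |β| ≤ |β - γ| := by
      have := abs_sub_abs_le_abs_sub γ β
      rw [abs_sub_comm] at this
      linarith
    linarith
  · have h3 : |β - γ| ≤ |β| + |γ| := abs_sub β γ
    have hle : |β - γ| ≤ 2 * Real.pi := by linarith
    have he : abs (2 * Real.pi - |β - γ|) ≤ Real.pi := by
      rw [abs_of_nonneg (by linarith)]; linarith
    have hj := aux_jordan he
    have hsin : |Real.sin ((2 * Real.pi - |β - γ|)/2)| = |Real.sin ((β - γ)/2)| := by
      have h1 : Real.sin ((2 * Real.pi - |β - γ|)/2) = Real.sin (Real.pi - |β - γ|/2) := by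
        congr 1; ring
      rw [h1, Real.sin_pi_sub]
      rcases abs_cases (β - γ) with ⟨h, _⟩ | ⟨h, _⟩
      · rw [h]
      · rw [h]
        rw [show -(β - γ)/2 = -((β - γ)/2) by ring, Real.sin_neg, abs_neg]
    rw [hsin, abs_of_nonneg (by linarith : (0:ℝ) ≤ 2*Real.pi - |β - γ|)] at hj
    linarith

lemma aux_abs_exp_sub_exp (β γ : ℝ) :
    ‖Complex.exp ((β:ℂ) * Complex.I) - Complex.exp ((γ:ℂ) * Complex.I)‖ =
      2 * |Real.sin ((β - γ)/2)| := by
  have factor : Complex.exp ((β:ℂ) * Complex.I) - Complex.exp ((γ:ℂ) * Complex.I) =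
      Complex.exp ((γ:ℂ) * Complex.I) * (Complex.exp (((β - γ : ℝ):ℂ) * Complex.I) - 1) := by
    rw [mul_sub, ← Complex.exp_add, mul_one]
    push_cast
    ring_nf
  rw [factor, norm_mul, Complex.norm_exp_ofReal_mul_I, one_mul]
  set d := β - γ
  have h1 : Complex.exp ((d:ℂ) * Complex.I) - 1 =
      Complex.ofReal (Real.cos d - 1) + Complex.ofReal (Real.sin d) * Complex.I := by
    apply Complex.ext <;>
      simp [Complex.exp_ofReal_mul_I_re, Complex.exp_ofReal_mul_I_im,
        ← Complex.ofReal_cos, ← Complex.ofReal_sin]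
  rw [h1]
  rw [Complex.norm_def, Complex.normSq_add_mul_I]
  have h2 : (Real.cos d - 1)^2 + (Real.sin d)^2 = 4 * (Real.sin (d/2))^2 := by
    have hs := Real.sin_sq_add_cos_sq d
    have hh := Real.sin_sq_eq_half_sub (d/2)
    rw [show 2*(d/2) = d by ring] at hh
    nlinarith [hs, hh]
  rw [h2]
  rw [show (4 : ℝ) * Real.sin (d/2)^2 = (2 * |Real.sin (d/2)|)^2 by
    rw [mul_pow, sq_abs]; ring]
  exact Real.sqrt_sq (by positivity)

lemma aux_exp_arg {u : ℂ} (hu : ‖u‖ = 1) :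
    u = Complex.exp ((u.arg : ℂ) * Complex.I) := by
  have := Complex.norm_mul_exp_arg_mul_I u
  rw [hu] at this
  simpa using this.symm

lemma aux_arccos_re {u : ℂ} (hu : ‖u‖ = 1) : Real.arccos u.re = |u.arg| := by
  have h1 : u.re = Real.cos u.arg := by
    conv_lhs => rw [aux_exp_arg hu]
    exact Complex.exp_ofReal_mul_I_re u.arg
  rw [h1, ← Real.cos_abs]
  exact Real.arccos_cos (abs_nonneg _) (Complex.abs_arg_le_pi u)

lemma aux_keyTrig {u v : ℂ} (hu : ‖u‖ = 1) (hv : ‖v‖ = 1) :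
    Real.arccos v.re ≤ Real.arccos u.re + Real.pi/2 * ‖u - v‖ := by
  have habs : ‖u - v‖ = 2 * |Real.sin ((u.arg - v.arg)/2)| := by
    conv_lhs => rw [aux_exp_arg hu, aux_exp_arg hv]
    exact aux_abs_exp_sub_exp u.arg v.arg
  rw [aux_arccos_re hu, aux_arccos_re hv, habs]
  have := aux_realTrig (Complex.abs_arg_le_pi u) (Complex.abs_arg_le_pi v)
  linarith [this]

lemma aux_arg_le {u : ℂ} (hu : ‖u‖ = 1) : |u.arg| ≤ Real.pi/2 * ‖u - 1‖ := by
  have := aux_keyTrig (u := 1) (v := u) (by simp) hu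
  rw [aux_arccos_re hu] at this
  simp only [Complex.one_re, Real.arccos_one] at this
  calc |u.arg| ≤ Real.pi/2 * ‖1 - u‖ := by linarith
    _ = Real.pi/2 * ‖u - 1‖ := by
        rw [show (1:ℂ) - u = -(u - 1) by ring, norm_neg]

lemma aux_exp_cont : Continuous (fun θ : ℝ => Complex.exp ((θ:ℂ) * Complex.I)) :=
  Complex.continuous_exp.comp (Complex.continuous_ofReal.mul continuous_const)

lemma aux_one_sub_ne {r : ℝ} (hr : |r| < 1) (θ : ℝ) :
    (1:ℂ) - (r:ℂ) * Complex.exp ((θ:ℂ) * Complex.I) ≠ 0 := by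
  have := aux_one_add_ne (t := -r) (by rwa [abs_neg]) (Complex.norm_exp_ofReal_mul_I θ)
  push_cast at this
  intro h
  exact this (by linear_combination h)

lemma aux_int_J {w : ℂ} (hw : ‖w‖ < 1) :
    ∫ θ in (0:ℝ)..(2*Real.pi),
      Complex.exp ((θ:ℂ) * Complex.I) * (Complex.exp ((θ:ℂ) * Complex.I) - w)⁻¹
      = 2 * Real.pi := by
  have hball : w ∈ Metric.ball (0:ℂ) 1 := by
    simpa [Metric.mem_ball, Complex.dist_eq] using hw
  have h := circleIntegral.integral_sub_inv_of_mem_ball hball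
  rw [circleIntegral] at h
  simp only [deriv_circleMap, circleMap_zero, Complex.ofReal_one, one_mul, smul_eq_mul] at h
  have h2 : (∫ θ in (0:ℝ)..(2*Real.pi),
      Complex.exp ((θ:ℂ) * Complex.I) * (Complex.exp ((θ:ℂ) * Complex.I) - w)⁻¹) * Complex.I
      = 2 * Real.pi * Complex.I := by
    rw [← intervalIntegral.integral_mul_const, ← h]
    apply intervalIntegral.integral_congr
    intro θ _
    ring
  exact mul_right_cancel₀ Complex.I_ne_zero h2

lemma aux_int_inv {r : ℝ} (hr : |r| < 1) :
    ∫ θ in (0:ℝ)..(2*Real.pi),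
      ((1:ℂ) - (r:ℂ) * Complex.exp ((θ:ℂ) * Complex.I))⁻¹ = 2 * Real.pi := by
  have hrc : ‖(r:ℂ)‖ < 1 := by rwa [Complex.norm_real, Real.norm_eq_abs]
  have hJ := aux_int_J hrc
  set f : ℝ → ℂ := fun y =>
    Complex.exp ((y:ℂ) * Complex.I) * (Complex.exp ((y:ℂ) * Complex.I) - (r:ℂ))⁻¹ with hf
  have hsub := intervalIntegral.integral_comp_sub_left f (2*Real.pi)
    (a := 0) (b := 2*Real.pi)
  rw [sub_zero, sub_self] at hsub
  have key : ∀ x : ℝ, f (2*Real.pi - x) =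
      ((1:ℂ) - (r:ℂ) * Complex.exp ((x:ℂ) * Complex.I))⁻¹ := by
    intro x
    have he : Complex.exp (((2*Real.pi - x : ℝ):ℂ) * Complex.I) =
        Complex.exp (-((x:ℂ) * Complex.I)) := by
      rw [show (((2*Real.pi - x : ℝ):ℂ) * Complex.I) =
        (2*Real.pi*Complex.I) + (-((x:ℂ) * Complex.I)) by push_cast; ring,
        Complex.exp_add, Complex.exp_two_pi_mul_I, one_mul]
    rw [hf]
    simp only
    rw [he]
    have hne : Complex.exp (-((x:ℂ) * Complex.I)) - (r:ℂ) ≠ 0 := by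
      intro h
      have : ‖(r:ℂ)‖ = 1 := by
        rw [show (r:ℂ) = Complex.exp (-((x:ℂ) * Complex.I)) by linear_combination -h]
        rw [show -((x:ℂ) * Complex.I) = ((-x : ℝ):ℂ) * Complex.I by push_cast; ring]
        exact Complex.norm_exp_ofReal_mul_I (-x)
      rw [Complex.norm_real, Real.norm_eq_abs] at this
      linarith
    have hne2 := aux_one_sub_ne hr x
    have hee : Complex.exp (-((x:ℂ) * Complex.I)) * Complex.exp ((x:ℂ) * Complex.I) = 1 := by
      rw [← Complex.exp_add]; simp
    have hm : Complex.exp (-((x:ℂ) * Complex.I)) ≠ 0 := Complex.exp_ne_zero _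
    have h9 : (1 - (r:ℂ)*Complex.exp ((x:ℂ)*Complex.I)) * Complex.exp (-((x:ℂ) * Complex.I))
        = Complex.exp (-((x:ℂ) * Complex.I)) - r := by
      linear_combination (-(r:ℂ)) * hee
    rw [← h9, mul_inv, mul_comm, mul_assoc, inv_mul_cancel₀ hm, mul_one]
  calc ∫ x in (0:ℝ)..(2*Real.pi), ((1:ℂ) - (r:ℂ) * Complex.exp ((x:ℂ) * Complex.I))⁻¹
      = ∫ x in (0:ℝ)..(2*Real.pi), f (2*Real.pi - x) := by
        apply intervalIntegral.integral_congr
        intro x _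
        exact (key x).symm
    _ = ∫ x in (0:ℝ)..(2*Real.pi), f x := hsub
    _ = 2 * Real.pi := hJ

lemma aux_cont_inv {r : ℝ} (hr : |r| < 1) :
    Continuous (fun θ : ℝ => ((1:ℂ) - (r:ℂ) * Complex.exp ((θ:ℂ) * Complex.I))⁻¹) := by
  apply Continuous.inv₀
  · exact continuous_const.sub (continuous_const.mul aux_exp_cont)
  · exact fun θ => aux_one_sub_ne hr θ

lemma aux_int_mobius {r : ℝ} (hr0 : 0 < r) (hr1 : r < 1) :
    ∫ θ in (0:ℝ)..(2*Real.pi),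
      (Complex.exp ((θ:ℂ) * Complex.I) - (r:ℂ)) / (1 - (r:ℂ) * Complex.exp ((θ:ℂ) * Complex.I))
      = ((-(2 * Real.pi * r) : ℝ) : ℂ) := by
  have hra : |r| < 1 := by rw [abs_of_pos hr0]; exact hr1
  have hrc : (r:ℂ) ≠ 0 := by exact_mod_cast ne_of_gt hr0
  have key : ∀ θ : ℝ, (Complex.exp ((θ:ℂ) * Complex.I) - (r:ℂ)) /
      (1 - (r:ℂ) * Complex.exp ((θ:ℂ) * Complex.I)) =
      (-(r:ℂ)⁻¹ : ℂ) + ((1 - (r:ℂ)^2)/(r:ℂ)) * ((1:ℂ) - (r:ℂ) * Complex.exp ((θ:ℂ) * Complex.I))⁻¹ := by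
    intro θ
    have hne := aux_one_sub_ne hra θ
    field_simp
    linear_combination (-1:ℂ) * mul_inv_cancel₀ hne
  rw [intervalIntegral.integral_congr (fun θ _ => key θ)]
  rw [intervalIntegral.integral_add (intervalIntegrable_const)
    (((aux_cont_inv hra).intervalIntegrable _ _).const_mul _)]
  rw [intervalIntegral.integral_const_mul, aux_int_inv hra]
  rw [intervalIntegral.integral_const]
  push_cast
  field_simp
  rw [Complex.real_smul]
  push_cast
  linear_combination (-(Real.pi:ℂ)*2) * mul_inv_cancel₀ hrc

lemma aux_mobius_cont {r : ℝ} (hr : |r| < 1) :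
    Continuous (fun θ : ℝ => (Complex.exp ((θ:ℂ) * Complex.I) - (r:ℂ)) /
      (1 - (r:ℂ) * Complex.exp ((θ:ℂ) * Complex.I))) := by
  apply Continuous.div
  · exact aux_exp_cont.sub continuous_const
  · exact continuous_const.sub (continuous_const.mul aux_exp_cont)
  · exact fun θ => aux_one_sub_ne hr θ

lemma aux_int_Fc {r : ℝ} (hr0 : 0 < r) (hr1 : r < 1) :
    ∫ θ in (0:ℝ)..(2*Real.pi), Fc r (Real.cos θ) = -(2 * Real.pi * r) := by
  have hra : |r| < 1 := by rw [abs_of_pos hr0]; exact hr1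
  have hInt : IntervalIntegrable (fun θ : ℝ => (Complex.exp ((θ:ℂ) * Complex.I) - (r:ℂ)) /
      (1 - (r:ℂ) * Complex.exp ((θ:ℂ) * Complex.I))) MeasureTheory.volume 0 (2*Real.pi) :=
    (aux_mobius_cont hra).intervalIntegrable _ _
  have h1 : ∀ θ : ℝ, Fc r (Real.cos θ) = (Complex.reCLM)
      ((Complex.exp ((θ:ℂ) * Complex.I) - (r:ℂ)) /
        (1 - (r:ℂ) * Complex.exp ((θ:ℂ) * Complex.I))) := by
    intro θ
    have := aux_re_mobius hr0.le hr1 (Complex.norm_exp_ofReal_mul_I θ)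
    simp only [Complex.reCLM_apply]
    rw [this, Complex.exp_ofReal_mul_I_re]
  rw [intervalIntegral.integral_congr (fun θ _ => h1 θ)]
  rw [Complex.reCLM.intervalIntegral_comp_comm hInt, aux_int_mobius hr0 hr1]
  simp

lemma aux_Fc_comp_cont {r : ℝ} (hr0 : 0 ≤ r) (hr1 : r < 1) {g : ℝ → ℝ} (hg : Continuous g)
    (hg1 : ∀ x, g x ≤ 1) : Continuous (fun x => Fc r (g x)) := by
  simp only [Fc]
  exact Continuous.div (((continuous_const.mul hg)).sub continuous_const)
    (continuous_const.sub ((continuous_const.mul hg)))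
    (fun x => ne_of_gt (aux_Fc_den_pos hr0 hr1 (hg1 x)))

lemma aux_reflect {f : ℝ → ℝ} (hf : ∀ x, f (2*Real.pi - x) = f x) :
    ∫ θ in (0:ℝ)..Real.pi, f θ = ∫ θ in Real.pi..(2*Real.pi), f θ := by
  have h := intervalIntegral.integral_comp_sub_left (a := 0) (b := Real.pi) f (2*Real.pi)
  rw [show 2*Real.pi - Real.pi = Real.pi by ring, sub_zero] at h
  rw [← h]
  exact intervalIntegral.integral_congr (fun x _ => (hf x).symm)

lemma aux_int_Fc_half {r : ℝ} (hr0 : 0 < r) (hr1 : r < 1) :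
    ∫ θ in (0:ℝ)..Real.pi, Fc r (Real.cos θ) = -(Real.pi * r) := by
  have hcont : Continuous (fun θ : ℝ => Fc r (Real.cos θ)) :=
    aux_Fc_comp_cont hr0.le hr1 Real.continuous_cos (fun x => Real.cos_le_one x)
  have hrefl := aux_reflect (f := fun θ => Fc r (Real.cos θ))
    (fun x => by simp only [Real.cos_two_pi_sub])
  have hsplit := intervalIntegral.integral_add_adjacent_intervals (μ := MeasureTheory.volume)
    (hcont.intervalIntegrable 0 Real.pi) (hcont.intervalIntegrable Real.pi (2*Real.pi))
  have h2 := aux_int_Fc hr0 hr1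
  rw [← hsplit] at h2
  rw [← hrefl] at h2
  linarith

lemma aux_int_h {r δ : ℝ} (hr0 : 0 < r) (hr1 : r < 1) (hδ0 : 0 < δ) (hδπ : δ < Real.pi)
    (α : ℝ) :
    ∫ x in (0:ℝ)..(2*Real.pi),
        Fc r (Real.cos (max 0 (Real.arccos (Real.cos (x - α)) - δ)))
      ≤ 2*(2*δ - Real.pi * r) := by
  set h : ℝ → ℝ := fun y => Fc r (Real.cos (max 0 (Real.arccos (Real.cos y) - δ))) with hh
  have hcont : Continuous h := by
    apply aux_Fc_comp_cont hr0.le hr1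
    · exact Real.continuous_cos.comp
        (continuous_const.max ((Real.continuous_arccos.comp Real.continuous_cos).sub
          continuous_const))
    · exact fun x => Real.cos_le_one _
  have hper : Function.Periodic h (2*Real.pi) := by
    intro y
    simp only [hh, Real.cos_add_two_pi]
  -- step 1 : shift
  have step1 : ∫ x in (0:ℝ)..(2*Real.pi), h (x - α) = ∫ x in (0:ℝ)..(2*Real.pi), h x := by
    rw [intervalIntegral.integral_comp_sub_right h α]
    rw [show (0:ℝ) - α = -α by ring, show 2*Real.pi - α = -α + 2*Real.pi by ring]
    rw [hper.intervalIntegral_add_eq (-α) 0]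
    rw [zero_add]
  -- step 2 : reflection
  have hrefl := aux_reflect (f := h) (fun x => by simp only [hh, Real.cos_two_pi_sub])
  have hsplit := intervalIntegral.integral_add_adjacent_intervals (μ := MeasureTheory.volume)
    (hcont.intervalIntegrable 0 Real.pi) (hcont.intervalIntegrable Real.pi (2*Real.pi))
  -- step 4 : [0, δ]
  have step4 : ∫ x in (0:ℝ)..δ, h x = δ := by
    have he : Set.EqOn h (fun _ => (1:ℝ)) (Set.uIcc 0 δ) := by
      intro x hx
      rw [Set.uIcc_of_le hδ0.le] at hx
      obtain ⟨hx0, hxδ⟩ := hx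
      simp only [hh]
      rw [Real.arccos_cos hx0 (by linarith), max_eq_left (by linarith), Real.cos_zero,
        aux_Fc_one hr0.le hr1]
    rw [intervalIntegral.integral_congr he, intervalIntegral.integral_const, smul_eq_mul]
    ring
  -- step 5 : [δ, π]
  have step5 : ∫ x in δ..Real.pi, h x = ∫ u in (0:ℝ)..(Real.pi - δ), Fc r (Real.cos u) := by
    have he : Set.EqOn h (fun x => Fc r (Real.cos (x - δ))) (Set.uIcc δ Real.pi) := by
      intro x hx
      rw [Set.uIcc_of_le hδπ.le] at hx
      obtain ⟨hx0, hxδ⟩ := hx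
      simp only [hh]
      rw [Real.arccos_cos (by linarith) hxδ, max_eq_right (by linarith)]
    rw [intervalIntegral.integral_congr he,
      intervalIntegral.integral_comp_sub_right (fun u => Fc r (Real.cos u)) δ, sub_self]
  -- step 6/7
  have hcontF : Continuous (fun θ : ℝ => Fc r (Real.cos θ)) :=
    aux_Fc_comp_cont hr0.le hr1 Real.continuous_cos (fun x => Real.cos_le_one x)
  have hsplit2 := intervalIntegral.integral_add_adjacent_intervals (μ := MeasureTheory.volume)
    (hcontF.intervalIntegrable 0 (Real.pi - δ)) (hcontF.intervalIntegrable (Real.pi - δ) Real.pi)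
  have step7 : -δ ≤ ∫ u in (Real.pi - δ)..Real.pi, Fc r (Real.cos u) := by
    have hconst : IntervalIntegrable (fun _ : ℝ => (-1:ℝ)) MeasureTheory.volume
        (Real.pi - δ) Real.pi := intervalIntegrable_const
    have hmono := intervalIntegral.integral_mono_on
      (f := fun _ => (-1:ℝ)) (g := fun u => Fc r (Real.cos u)) (by linarith : Real.pi - δ ≤ Real.pi)
      hconst (hcontF.intervalIntegrable _ _)
      (fun u _ => aux_neg_one_le_Fc hr0.le hr1 (Real.neg_one_le_cos u) (Real.cos_le_one u))
    rw [intervalIntegral.integral_const, smul_eq_mul] at hmono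
    calc -δ = (Real.pi - (Real.pi - δ)) * (-1) := by ring
      _ ≤ _ := hmono
  have step8 := aux_int_Fc_half hr0 hr1
  -- combine
  have hsplit3 := intervalIntegral.integral_add_adjacent_intervals (μ := MeasureTheory.volume)
    (hcont.intervalIntegrable 0 δ) (hcont.intervalIntegrable δ Real.pi)
  calc ∫ x in (0:ℝ)..(2*Real.pi), Fc r (Real.cos (max 0 (Real.arccos (Real.cos (x - α)) - δ)))
      = ∫ x in (0:ℝ)..(2*Real.pi), h (x - α) := rfl
    _ = ∫ x in (0:ℝ)..(2*Real.pi), h x := step1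
    _ = (∫ x in (0:ℝ)..Real.pi, h x) + ∫ x in Real.pi..(2*Real.pi), h x := hsplit.symm
    _ = 2 * ∫ x in (0:ℝ)..Real.pi, h x := by beta_reduce at hrefl; rw [← hrefl]; ring
    _ = 2 * ((∫ x in (0:ℝ)..δ, h x) + ∫ x in δ..Real.pi, h x) := by rw [hsplit3]
    _ = 2 * (δ + ∫ u in (0:ℝ)..(Real.pi - δ), Fc r (Real.cos u)) := by rw [step4, step5]
    _ ≤ 2*(2*δ - Real.pi * r) := by
        have : (∫ u in (0:ℝ)..(Real.pi - δ), Fc r (Real.cos u)) ≤ δ - Real.pi * r := by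
          have := hsplit2
          linarith [step7, step8, this]
        linarith

lemma aux_one_sub_ne' {r : ℝ} (hr : |r| < 1) {z : ℂ} (hz : ‖z‖ = 1) :
    (1:ℂ) - (r:ℂ) * z ≠ 0 := by
  have h := aux_one_add_ne (t := -r) (by rwa [abs_neg]) hz
  push_cast at h
  intro h2
  exact h (by linear_combination h2)

lemma aux_conj_polar (w : ℂ) :
    (starRingEnd ℂ) w = (‖w‖ : ℂ) * Complex.exp (((-w.arg : ℝ):ℂ) * Complex.I) := by
  conv_lhs => rw [← Complex.norm_mul_exp_arg_mul_I w]
  rw [map_mul, ← Complex.exp_conj]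
  push_cast
  simp [Complex.conj_ofReal]

lemma aux_exp_neg_mul (a : ℝ) :
    Complex.exp (((-a : ℝ):ℂ) * Complex.I) * Complex.exp ((a:ℂ) * Complex.I) = 1 := by
  rw [← Complex.exp_add]
  push_cast
  rw [show (-(a:ℂ)) * Complex.I + (a:ℂ) * Complex.I = 0 by ring, Complex.exp_zero]



/-- Let `s ∈ (−1,1)`, `L = (1 + |s|)/(1 − |s|)`, `ε₀ > 0`, and let
`ψ : S¹ → S¹` be continuous with `|ψ(ζ) − h_s(ζ)| ≤ ε₀` on `S¹`.  Then
`d_{S¹}(h_s⁻¹(ψ(ζ)), ζ) ≤ π·L·ε₀/2` for all `ζ ∈ S¹`, and every barycenter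
`w ∈ 𝔻` of `h_s⁻¹ ∘ ψ` satisfies `|w| ≤ π·L·ε₀`. -/
theorem stmt_14 (s : ℝ) (hs : -1 < s) (hs1 : s < 1) (ε₀ : ℝ) (hε₀ : 0 < ε₀)
    (ψ : ℂ → ℂ)
    (hcont : ContinuousOn ψ {z : ℂ | ‖z‖ = 1})
    (hmaps : ∀ ζ : ℂ, ‖ζ‖ = 1 → ‖ψ ζ‖ = 1)
    (hclose : ∀ ζ : ℂ, ‖ζ‖ = 1 → ‖ψ ζ - mobH s ζ‖ ≤ ε₀) :
    (∀ ζ : ℂ, ‖ζ‖ = 1 →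
      dS1 (mobH (-s) (ψ ζ)) ζ ≤ Real.pi * ((1 + |s|) / (1 - |s|)) * ε₀ / 2) ∧
    (∀ w : ℂ, ‖w‖ < 1 → avgMap (fun ζ => mobH (-s) (ψ ζ)) w = 0 →
      ‖w‖ ≤ Real.pi * ((1 + |s|) / (1 - |s|)) * ε₀) := by
  have hpi := Real.pi_pos
  have hpi1 : 1 ≤ Real.pi := by linarith [Real.pi_gt_three]
  have hs' : |s| < 1 := abs_lt.2 ⟨hs, hs1⟩
  have hs'' : |(-s)| < 1 := by rwa [abs_neg]
  have habs0 : 0 ≤ |s| := abs_nonneg s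
  have hLpos : 0 < (1 + |s|) / (1 - |s|) := by
    apply div_pos <;> linarith
  have hε₁ : 0 < (1 + |s|) / (1 - |s|) * ε₀ := mul_pos hLpos hε₀
  have chord : ∀ ζ : ℂ, ‖ζ‖ = 1 →
      ‖mobH (-s) (ψ ζ) - ζ‖ ≤ (1 + |s|) / (1 - |s|) * ε₀ := by
    intro ζ hζ
    have hb : ‖mobH s ζ‖ = 1 := aux_mobH_abs hs' hζ
    have ha : ‖ψ ζ‖ = 1 := hmaps ζ hζ
    have hinv : mobH (-s) (mobH s ζ) = ζ := aux_mobH_inv hs' hζ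
    calc ‖mobH (-s) (ψ ζ) - ζ‖
        = ‖mobH (-s) (ψ ζ) - mobH (-s) (mobH s ζ)‖ := by rw [hinv]
      _ ≤ (1 + |s|) / (1 - |s|) * ‖ψ ζ - mobH s ζ‖ := aux_mobH_diff hs' ha hb
      _ ≤ (1 + |s|) / (1 - |s|) * ε₀ :=
          mul_le_mul_of_nonneg_left (hclose ζ hζ) hLpos.le
  have habsφ : ∀ ζ : ℂ, ‖ζ‖ = 1 → ‖mobH (-s) (ψ ζ)‖ = 1 :=
    fun ζ hζ => aux_mobH_abs hs'' (hmaps ζ hζ)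
  constructor
  · -- Part 1
    intro ζ hζ
    have hφ := habsφ ζ hζ
    have hζζ : ζ * (starRingEnd ℂ) ζ = 1 := by
      rw [Complex.mul_conj, Complex.normSq_eq_norm_sq, hζ]
      norm_num
    have habsu : ‖mobH (-s) (ψ ζ) * (starRingEnd ℂ) ζ‖ = 1 := by
      rw [norm_mul, hφ, Complex.norm_conj, hζ]
      norm_num
    set u := mobH (-s) (ψ ζ) * (starRingEnd ℂ) ζ with hu
    have hu1 : u - 1 = (starRingEnd ℂ) ζ * (mobH (-s) (ψ ζ) - ζ) := by
      rw [hu, ← hζζ]; ring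
    have habsu1 : ‖u - 1‖ ≤ (1 + |s|) / (1 - |s|) * ε₀ := by
      rw [hu1, norm_mul, Complex.norm_conj, hζ, one_mul]
      exact chord ζ hζ
    have harg := aux_arg_le habsu
    have hexp2 : ζ = Complex.exp (Complex.I * ((ζ.arg : ℝ) : ℂ)) := by
      rw [mul_comm]; exact aux_exp_arg hζ
    have hexp1 : mobH (-s) (ψ ζ) =
        Complex.exp (Complex.I * (((ζ.arg + u.arg : ℝ)) : ℂ)) := by
      rw [mul_comm]
      push_cast
      rw [add_mul, Complex.exp_add]
      rw [← aux_exp_arg hζ, ← aux_exp_arg habsu, hu]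
      symm
      calc ζ * (mobH (-s) (ψ ζ) * (starRingEnd ℂ) ζ)
          = mobH (-s) (ψ ζ) * (ζ * (starRingEnd ℂ) ζ) := by ring
        _ = mobH (-s) (ψ ζ) := by rw [hζζ, mul_one]
    have hbdd : BddBelow {d : ℝ | ∃ x₁ x₂ : ℝ,
        mobH (-s) (ψ ζ) = Complex.exp (Complex.I * (x₁ : ℂ)) ∧
        ζ = Complex.exp (Complex.I * (x₂ : ℂ)) ∧ d = |x₁ - x₂|} := by
      refine ⟨0, ?_⟩
      rintro d ⟨x₁, x₂, _, _, hd⟩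
      rw [hd]
      exact abs_nonneg _
    have hmem : |(ζ.arg + u.arg) - ζ.arg| ∈ {d : ℝ | ∃ x₁ x₂ : ℝ,
        mobH (-s) (ψ ζ) = Complex.exp (Complex.I * (x₁ : ℂ)) ∧
        ζ = Complex.exp (Complex.I * (x₂ : ℂ)) ∧ d = |x₁ - x₂|} :=
      ⟨ζ.arg + u.arg, ζ.arg, hexp1, hexp2, rfl⟩
    rw [dS1]
    calc sInf _ ≤ |(ζ.arg + u.arg) - ζ.arg| := csInf_le hbdd hmem
      _ = |u.arg| := by rw [show (ζ.arg + u.arg) - ζ.arg = u.arg by ring]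
      _ ≤ Real.pi/2 * ‖u - 1‖ := harg
      _ ≤ Real.pi/2 * ((1 + |s|) / (1 - |s|) * ε₀) := by nlinarith
      _ = Real.pi * ((1 + |s|) / (1 - |s|)) * ε₀ / 2 := by ring
  · -- Part 2
    intro w hw h0
    by_cases htriv : 1 ≤ Real.pi * ((1 + |s|) / (1 - |s|)) * ε₀
    · linarith
    push_neg at htriv
    by_cases hw0 : w = 0
    · rw [hw0]
      simp only [norm_zero]
      nlinarith
    have hr0 : 0 < ‖w‖ := by
      simpa [norm_pos_iff] using hw0
    set r : ℝ := ‖w‖ with hrdef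
    set α : ℝ := w.arg with hαdef
    set ε₁ : ℝ := (1 + |s|) / (1 - |s|) * ε₀ with hε₁def
    set δ : ℝ := Real.pi / 2 * ε₁ with hδdef
    have hδ0 : 0 < δ := by positivity
    have h2δ : 2 * δ = Real.pi * ((1 + |s|) / (1 - |s|)) * ε₀ := by
      rw [hδdef, hε₁def]; ring
    have hδπ : δ < Real.pi := by nlinarith
    have hra : |r| < 1 := by rwa [abs_of_pos hr0]
    -- the rotated map
    set η : ℝ → ℂ := fun x => mobH (-s) (ψ (Complex.exp (Complex.I * (x:ℂ)))) with hη
    have habse : ∀ x : ℝ, ‖Complex.exp (Complex.I * (x:ℂ))‖ = 1 := by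
      intro x
      rw [mul_comm]
      exact Complex.norm_exp_ofReal_mul_I x
    have habsη : ∀ x : ℝ, ‖η x‖ = 1 := fun x => habsφ _ (habse x)
    have hcontη : Continuous η := by
      have hψe : Continuous (fun x : ℝ => ψ (Complex.exp (Complex.I * (x:ℂ)))) := by
        apply hcont.comp_continuous
        · exact Complex.continuous_exp.comp (continuous_const.mul Complex.continuous_ofReal)
        · exact fun x => habse x
      rw [hη]
      simp only [mobH]
      apply Continuous.div
      · exact hψe.add continuous_const
      · exact continuous_const.add (continuous_const.mul hψe)
      · exact fun x => aux_one_add_ne hs'' (hmaps _ (habse x))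
    set uu : ℝ → ℂ := fun x => Complex.exp (((-α : ℝ):ℂ) * Complex.I) * η x with huu
    have habsuu : ∀ x : ℝ, ‖uu x‖ = 1 := by
      intro x
      rw [huu]
      simp only
      rw [norm_mul, Complex.norm_exp_ofReal_mul_I, habsη, one_mul]
    have hcontuu : Continuous uu := continuous_const.mul hcontη
    have hreuu : ∀ x, -1 ≤ (uu x).re ∧ (uu x).re ≤ 1 := by
      intro x
      have h1 := Complex.abs_re_le_norm (uu x)
      rw [habsuu x] at h1
      exact abs_le.1 h1
    -- pointwise identity
    have hwpolar : w = (r:ℂ) * Complex.exp ((α:ℂ) * Complex.I) :=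
      (Complex.norm_mul_exp_arg_mul_I w).symm
    have hwconj : (starRingEnd ℂ) w = (r:ℂ) * Complex.exp (((-α : ℝ):ℂ) * Complex.I) :=
      aux_conj_polar w
    have hkey : ∀ x : ℝ,
        Complex.exp (((-α : ℝ):ℂ) * Complex.I) *
          ((η x - w) / (1 - (starRingEnd ℂ) w * η x)) =
        (uu x - (r:ℂ)) / (1 - (r:ℂ) * uu x) := by
      intro x
      have hnum : Complex.exp (((-α : ℝ):ℂ) * Complex.I) * (η x - w) = uu x - (r:ℂ) := by
        rw [hwpolar, huu]
        simp only
        rw [mul_sub]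
        congr 1
        rw [show Complex.exp (((-α : ℝ):ℂ) * Complex.I) * ((r:ℂ) * Complex.exp ((α:ℂ) * Complex.I))
          = (r:ℂ) * (Complex.exp (((-α : ℝ):ℂ) * Complex.I) * Complex.exp ((α:ℂ) * Complex.I)) by ring,
          aux_exp_neg_mul α, mul_one]
      have hden : 1 - (starRingEnd ℂ) w * η x = 1 - (r:ℂ) * uu x := by
        rw [hwconj, huu]
        simp only
        ring
      rw [← hnum, ← hden]
      rw [mul_div_assoc]
    -- integral equals zero
    simp only [avgMap] at h0
    have h2πne : (1 / (2 * Real.pi) : ℝ) ≠ 0 := by positivity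
    have hI0 : (∫ x in (0:ℝ)..(2*Real.pi),
        (η x - w) / (1 - (starRingEnd ℂ) w * η x)) = 0 := by
      rcases smul_eq_zero.1 h0 with h | h
      · exact absurd h h2πne
      · exact h
    have hcontX : Continuous (fun x : ℝ => (uu x - (r:ℂ)) / (1 - (r:ℂ) * uu x)) := by
      apply Continuous.div
      · exact hcontuu.sub continuous_const
      · exact continuous_const.sub (continuous_const.mul hcontuu)
      · exact fun x => aux_one_sub_ne' hra (habsuu x)
    have hIX : (∫ x in (0:ℝ)..(2*Real.pi), (uu x - (r:ℂ)) / (1 - (r:ℂ) * uu x)) = 0 := by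
      rw [intervalIntegral.integral_congr (fun x _ => (hkey x).symm)]
      rw [intervalIntegral.integral_const_mul, hI0, mul_zero]
    have hG0 : (∫ x in (0:ℝ)..(2*Real.pi), Fc r ((uu x).re)) = 0 := by
      have hGre : ∀ x : ℝ, Fc r ((uu x).re) =
          Complex.reCLM ((uu x - (r:ℂ)) / (1 - (r:ℂ) * uu x)) := by
        intro x
        simp only [Complex.reCLM_apply]
        exact (aux_re_mobius hr0.le hw (habsuu x)).symm
      rw [intervalIntegral.integral_congr (fun x _ => hGre x)]
      rw [Complex.reCLM.intervalIntegral_comp_comm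
        (hcontX.intervalIntegrable _ _), hIX]
      simp
    -- pointwise comparison
    have hptwise : ∀ x : ℝ, Fc r ((uu x).re) ≤
        Fc r (Real.cos (max 0 (Real.arccos (Real.cos (x - α)) - δ))) := by
      intro x
      have hv : ‖Complex.exp (((x - α : ℝ):ℂ) * Complex.I)‖ = 1 :=
        Complex.norm_exp_ofReal_mul_I _
      have hvre : (Complex.exp (((x - α : ℝ):ℂ) * Complex.I)).re = Real.cos (x - α) :=
        Complex.exp_ofReal_mul_I_re _
      have hdiff : uu x - Complex.exp (((x - α : ℝ):ℂ) * Complex.I) =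
          Complex.exp (((-α : ℝ):ℂ) * Complex.I) * (η x - Complex.exp (Complex.I * (x:ℂ))) := by
        rw [huu]
        simp only
        rw [mul_sub]
        congr 1
        rw [← Complex.exp_add]
        congr 1
        push_cast
        ring
      have hchordx : ‖uu x - Complex.exp (((x - α : ℝ):ℂ) * Complex.I)‖ ≤ ε₁ := by
        rw [hdiff, norm_mul, Complex.norm_exp_ofReal_mul_I, one_mul]
        exact chord _ (habse x)
      have hkt := aux_keyTrig (habsuu x) hv
      rw [hvre] at hkt
      have hA0 : 0 ≤ Real.arccos ((uu x).re) := Real.arccos_nonneg _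
      have hAπ : Real.arccos ((uu x).re) ≤ Real.pi := Real.arccos_le_pi _
      have hm : max 0 (Real.arccos (Real.cos (x - α)) - δ) ≤ Real.arccos ((uu x).re) := by
        apply max_le hA0
        have : Real.pi/2 * ‖uu x - Complex.exp (((x - α : ℝ):ℂ) * Complex.I)‖
            ≤ δ := by
          rw [hδdef]
          nlinarith
        linarith
      have hcos : (uu x).re ≤ Real.cos (max 0 (Real.arccos (Real.cos (x - α)) - δ)) := by
        have h1 : Real.cos (Real.arccos ((uu x).re)) = (uu x).re :=
          Real.cos_arccos (hreuu x).1 (hreuu x).2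
        rw [← h1]
        apply Real.cos_le_cos_of_nonneg_of_le_pi (le_max_left _ _) hAπ hm
      exact aux_Fc_mono hr0.le hw hcos (Real.cos_le_one _)
    -- integrate the comparison
    have hcontG : Continuous (fun x : ℝ => Fc r ((uu x).re)) :=
      aux_Fc_comp_cont hr0.le hw (Complex.continuous_re.comp hcontuu)
        (fun x => (hreuu x).2)
    have hcontH : Continuous (fun x : ℝ =>
        Fc r (Real.cos (max 0 (Real.arccos (Real.cos (x - α)) - δ)))) := by
      apply aux_Fc_comp_cont hr0.le hw
      · exact Real.continuous_cos.comp (continuous_const.max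
          (((Real.continuous_arccos.comp (Real.continuous_cos.comp
            (continuous_id.sub continuous_const))).sub continuous_const)))
      · exact fun x => Real.cos_le_one _
    have hmono := intervalIntegral.integral_mono_on (μ := MeasureTheory.volume)
      (by linarith : (0:ℝ) ≤ 2*Real.pi)
      (hcontG.intervalIntegrable _ _) (hcontH.intervalIntegrable _ _)
      (fun x _ => hptwise x)
    rw [hG0] at hmono
    have hinth := aux_int_h hr0 hw hδ0 hδπ α
    have hfinal : Real.pi * r ≤ 2 * δ := by linarith
    have : r ≤ 2 * δ := by nlinarith
    linarith [h2δ, this]
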